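/- Let X be a nonempty closed L-pseudo-Lipschitz subset of the pseudo-Euclidean space ℝ_{(l,p)} with L < 1. Then the squared-distance function ρ(·,X) : ℝ^n → ℝ is locally Lipschitz (with respect to the Euclidean norm on ℝ^n). -/

import Mathlib

open Filter Topology Set

noncomputable section

/-- The pseudo-Euclidean space `ℝ_{(l,p)}`: `ℝ^(l+p)` with the Euclidean topology. -/
abbrev PE (l p : ℕ) := EuclideanSpace ℝ (Fin (l + p))

/-- The quadratic form `Q(x) = ‖x‖_l² − ‖x‖_p²`. -/
def Q (l p : ℕ) (x : PE l p) : ℝ :=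
  ∑ i : Fin (l + p), if (i : ℕ) < l then (x i) ^ 2 else -((x i) ^ 2)

/-- The pseudo-scalar product `⟪x,y⟫ = Σ_{i<l} x_i y_i − Σ_{i≥l} x_i y_i`. -/
def pseudoInner (l p : ℕ) (x y : PE l p) : ℝ :=
  ∑ i : Fin (l + p), if (i : ℕ) < l then x i * y i else -(x i * y i)

/-- `‖x‖_l`: the Euclidean norm of the first `l` coordinates. -/
def normL (l p : ℕ) (x : PE l p) : ℝ :=
  Real.sqrt (∑ i : Fin (l + p), if (i : ℕ) < l then (x i) ^ 2 else 0)

/-- `‖x‖_p`: the Euclidean norm of the last `p` coordinates. -/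
def normP (l p : ℕ) (x : PE l p) : ℝ :=
  Real.sqrt (∑ i : Fin (l + p), if (i : ℕ) < l then 0 else (x i) ^ 2)

/-- `X` is acausal: `Q(x−y) > 0` for all distinct `x, y ∈ X`. -/
def Acausal (l p : ℕ) (X : Set (PE l p)) : Prop :=
  ∀ x ∈ X, ∀ y ∈ X, x ≠ y → 0 < Q l p (x - y)

/-- `X` is `L`-pseudo-Lipschitz: `L‖x−y‖_l ≥ ‖x−y‖_p` for all `x, y ∈ X`. -/
def PseudoLipschitz (l p : ℕ) (L : ℝ) (X : Set (PE l p)) : Prop :=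
  ∀ x ∈ X, ∀ y ∈ X, normP l p (x - y) ≤ L * normL l p (x - y)

/-- The squared-distance function `ρ(a,X) = inf {Q(x−a) : x ∈ X}`. -/
def rho (l p : ℕ) (X : Set (PE l p)) (a : PE l p) : ℝ :=
  sInf ((fun x => Q l p (x - a)) '' X)

/-- The set of closest points `m(a) = {x ∈ X : Q(x−a) = ρ(a,X)}`, via its equivalent
description `m(a) = {x ∈ X : ∀ b ∈ X, Q(x−a) ≤ Q(b−a)}`. -/
def mm (l p : ℕ) (X : Set (PE l p)) (a : PE l p) : Set (PE l p) :=
  {x ∈ X | ∀ b ∈ X, Q l p (x - a) ≤ Q l p (b - a)}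

/-- The medial axis `M_X`: points with at least two closest points in `X`. -/
def medialAxis (l p : ℕ) (X : Set (PE l p)) : Set (PE l p) :=
  {a | (mm l p X a).Nontrivial}

/-- The vacant axis `W_X`: points with no closest point in `X`. -/
def vacantAxis (l p : ℕ) (X : Set (PE l p)) : Set (PE l p) :=
  {a | mm l p X a = ∅}

/-- The normal set `N(a) = {x : a ∈ m(x)}`. -/
def NN (l p : ℕ) (X : Set (PE l p)) (a : PE l p) : Set (PE l p) :=
  {x | a ∈ mm l p X x}

/-- The strict normal set `N'(a) = {x : m(x) = {a}}`. -/
def NN' (l p : ℕ) (X : Set (PE l p)) (a : PE l p) : Set (PE l p) :=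
  {x | mm l p X x = {a}}

lemma sum_sq_eq (l p : ℕ) (u : PE l p) : ∑ i, (u i)^2 = ‖u‖^2 := by
  rw [EuclideanSpace.norm_eq, Real.sq_sqrt (Finset.sum_nonneg fun i _ => by positivity)]
  simp [Real.norm_eq_abs, sq_abs]

lemma normL_sq (l p : ℕ) (u : PE l p) :
    (normL l p u)^2 = ∑ i : Fin (l+p), if (i:ℕ) < l then (u i)^2 else 0 := by
  rw [normL, Real.sq_sqrt]
  exact Finset.sum_nonneg fun i _ => by split <;> positivity

lemma normP_sq (l p : ℕ) (u : PE l p) :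
    (normP l p u)^2 = ∑ i : Fin (l+p), if (i:ℕ) < l then 0 else (u i)^2 := by
  rw [normP, Real.sq_sqrt]
  exact Finset.sum_nonneg fun i _ => by split <;> positivity

lemma Q_eq_norm (l p : ℕ) (u : PE l p) :
    Q l p u = (normL l p u)^2 - (normP l p u)^2 := by
  rw [normL_sq, normP_sq, Q, ← Finset.sum_sub_distrib]
  exact Finset.sum_congr rfl fun i _ => by split <;> ring

lemma norm_sq_split (l p : ℕ) (u : PE l p) :
    ‖u‖^2 = (normL l p u)^2 + (normP l p u)^2 := by
  rw [normL_sq, normP_sq, ← sum_sq_eq, ← Finset.sum_add_distrib]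
  exact Finset.sum_congr rfl fun i _ => by split <;> ring

lemma abs_Q_le (l p : ℕ) (u : PE l p) : |Q l p u| ≤ ‖u‖^2 := by
  rw [Q_eq_norm, norm_sq_split, abs_le]
  constructor <;> nlinarith [sq_nonneg (normL l p u), sq_nonneg (normP l p u)]

lemma Q_add_eq (l p : ℕ) (u v : PE l p) :
    Q l p (u + v) = Q l p u + 2 * pseudoInner l p u v + Q l p v := by
  simp only [Q, pseudoInner, Finset.mul_sum, ← Finset.sum_add_distrib]
  refine Finset.sum_congr rfl fun i _ => ?_
  have : (u + v) i = u i + v i := rfl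
  rw [this]; split <;> ring

lemma Q_sub_eq (l p : ℕ) (u v : PE l p) :
    Q l p u - Q l p v = pseudoInner l p (u + v) (u - v) := by
  simp only [Q, pseudoInner, ← Finset.sum_sub_distrib]
  refine Finset.sum_congr rfl fun i _ => ?_
  have h1 : (u + v) i = u i + v i := rfl
  have h2 : (u - v) i = u i - v i := rfl
  rw [h1, h2]; split <;> ring

lemma abs_pseudoInner_le (l p : ℕ) (u v : PE l p) :
    |pseudoInner l p u v| ≤ ‖u‖ * ‖v‖ := by
  set v' : PE l p := WithLp.toLp 2 fun (i : Fin (l + p)) => if (i:ℕ) < l then v i else -(v i) with hv'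
  have h1 : pseudoInner l p u v = ∑ i, u i * v' i := by
    refine Finset.sum_congr rfl fun i _ => ?_
    rw [hv']; by_cases h : (i:ℕ) < l <;> simp [h]
  have h2 : ‖v'‖ = ‖v‖ := by
    have : ‖v'‖^2 = ‖v‖^2 := by
      rw [← sum_sq_eq, ← sum_sq_eq]
      refine Finset.sum_congr rfl fun i _ => ?_
      rw [hv']; by_cases h : (i:ℕ) < l <;> simp [h]
    calc ‖v'‖ = Real.sqrt (‖v'‖^2) := (Real.sqrt_sq (norm_nonneg _)).symm
    _ = Real.sqrt (‖v‖^2) := by rw [this]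
    _ = ‖v‖ := Real.sqrt_sq (norm_nonneg _)
  rw [h1, ← h2]
  have := abs_real_inner_le_norm u v'
  simpa [PiLp.inner_apply, mul_comm] using this

set_option maxHeartbeats 1000000 in
/-- For nonempty closed `L`-pseudo-Lipschitz `X` with `L < 1`, the
squared-distance function `ρ(·,X)` is locally Lipschitz on `ℝ^n`. -/
theorem rho_locallyLipschitz (l p : ℕ) (hl : 1 ≤ l) (L : ℝ) (hL : L < 1)
    (X : Set (PE l p)) (hne : X.Nonempty) (hX : IsClosed X)
    (hlip : PseudoLipschitz l p L X) :
    LocallyLipschitz (rho l p X) := by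
  intro a₀
  obtain ⟨x₀, hx₀⟩ := hne
  set L' : ℝ := max L 0 with hL'def
  have hL'0 : 0 ≤ L' := le_max_right _ _
  have hL'1 : L' < 1 := max_lt hL one_pos
  set c : ℝ := (1 - L'^2) / (1 + L'^2) with hcdef
  have hd : (0:ℝ) < 1 + L'^2 := by positivity
  have hc : 0 < c := div_pos (by nlinarith) hd
  have hcc : c * (1 + L'^2) = 1 - L'^2 := div_mul_cancel₀ _ hd.ne'
  have hco : ∀ x ∈ X, ∀ y ∈ X, c * ‖x - y‖^2 ≤ Q l p (x - y) := by
    intro x hx y hy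
    have h1 := hlip x hx y hy
    have hnl : 0 ≤ normL l p (x-y) := Real.sqrt_nonneg _
    have hnp : 0 ≤ normP l p (x-y) := Real.sqrt_nonneg _
    have h2 : normP l p (x-y) ≤ L' * normL l p (x-y) :=
      h1.trans (mul_le_mul_of_nonneg_right (le_max_left _ _) hnl)
    rw [Q_eq_norm, norm_sq_split]
    nlinarith [sq_nonneg (normL l p (x-y))]
  set r : ℝ := ‖x₀ - a₀‖ + 1 with hrdef
  have hr1 : 1 ≤ r := le_add_of_nonneg_left (norm_nonneg _)
  set R : ℝ := max 1 ((2*r + 2*r^2 + 2)/c) with hRdef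
  have hR1 : 1 ≤ R := le_max_left _ _
  have hRge : (2*r + 2*r^2 + 2)/c ≤ R := le_max_right _ _
  set K : ℝ := 2*(R + r) with hKdef
  have hK0 : 0 ≤ K := by rw [hKdef]; nlinarith
  clear_value L' c r R K
  refine ⟨K.toNNReal, Metric.ball a₀ 1, Metric.ball_mem_nhds a₀ one_pos, ?_⟩
  rw [lipschitzOnWith_iff_dist_le_mul]
  have hxa : ∀ a ∈ Metric.ball a₀ 1, ‖x₀ - a‖ ≤ r := by
    intro a ha
    have h1 : ‖x₀ - a‖ ≤ ‖x₀ - a₀‖ + ‖a₀ - a‖ := by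
      calc ‖x₀ - a‖ = ‖(x₀ - a₀) + (a₀ - a)‖ := by rw [sub_add_sub_cancel]
      _ ≤ _ := norm_add_le _ _
    have h2 : ‖a₀ - a‖ < 1 := by
      rw [← dist_eq_norm, dist_comm]; exact ha
    rw [hrdef]; linarith
  have hlb : ∀ a ∈ Metric.ball a₀ 1, ∀ x ∈ X,
      c*‖x-x₀‖^2 - 2*‖x-x₀‖*r - r^2 ≤ Q l p (x - a) := by
    intro a ha x hx
    rw [← sub_add_sub_cancel x x₀ a, Q_add_eq]
    have h2 := hco x hx x₀ hx₀
    have h3 := abs_pseudoInner_le l p (x - x₀) (x₀ - a)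
    have h4 := abs_Q_le l p (x₀ - a)
    have h5 := hxa a ha
    have h6 : (0:ℝ) ≤ ‖x - x₀‖ := norm_nonneg _
    have h7 : (0:ℝ) ≤ ‖x₀ - a‖ := norm_nonneg _
    rw [abs_le] at h3 h4
    nlinarith [mul_le_mul_of_nonneg_left h5 h6]
  have hbddB : ∀ a ∈ Metric.ball a₀ 1, BddBelow ((fun x => Q l p (x - a)) '' X) := by
    intro a ha
    refine ⟨-(r^2/c + r^2), ?_⟩
    rintro z ⟨x, hx, rfl⟩
    have h1 := hlb a ha x hx
    have h6 : (0:ℝ) ≤ ‖x - x₀‖ := norm_nonneg _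
    simp only
    have h8 : -r^2 ≤ (c*‖x-x₀‖^2 - 2*‖x-x₀‖*r)*c := by nlinarith [sq_nonneg (c*‖x-x₀‖ - r)]
    have h9 : -(r^2/c) ≤ c*‖x-x₀‖^2 - 2*‖x-x₀‖*r := by
      rw [← neg_div, div_le_iff₀ hc]; exact h8
    linarith
  have hne' : ∀ a : PE l p, ((fun x => Q l p (x - a)) '' X).Nonempty :=
    fun a => ⟨_, ⟨x₀, hx₀, rfl⟩⟩
  have hrho_le : ∀ a ∈ Metric.ball a₀ 1, rho l p X a ≤ r^2 := by
    intro a ha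
    have h1 : rho l p X a ≤ Q l p (x₀ - a) := csInf_le (hbddB a ha) ⟨x₀, hx₀, rfl⟩
    have h4 := abs_Q_le l p (x₀ - a)
    have h5 := hxa a ha
    have h7 : (0:ℝ) ≤ ‖x₀ - a‖ := norm_nonneg _
    rw [abs_le] at h4
    nlinarith
  have key : ∀ a ∈ Metric.ball a₀ 1, ∀ b ∈ Metric.ball a₀ 1,
      rho l p X a ≤ rho l p X b + K * ‖a - b‖ := by
    intro a ha b hb
    have hKab : 0 ≤ K * ‖a - b‖ := mul_nonneg hK0 (norm_nonneg _)
    have main : ∀ x ∈ X, rho l p X a ≤ Q l p (x - b) + K * ‖a - b‖ := by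
      intro x hx
      by_cases hxR : ‖x - x₀‖ ≤ R
      · have h1 := Q_sub_eq l p (x - a) (x - b)
        have h2 := abs_pseudoInner_le l p ((x-a)+(x-b)) ((x-a)-(x-b))
        have h3 : (x-a) - (x-b) = b - a := by abel
        have hxar : ‖x - a‖ ≤ R + r := by
          calc ‖x - a‖ = ‖(x - x₀) + (x₀ - a)‖ := by rw [sub_add_sub_cancel]
          _ ≤ ‖x - x₀‖ + ‖x₀ - a‖ := norm_add_le _ _
          _ ≤ R + r := add_le_add hxR (hxa a ha)
        have hxbr : ‖x - b‖ ≤ R + r := by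
          calc ‖x - b‖ = ‖(x - x₀) + (x₀ - b)‖ := by rw [sub_add_sub_cancel]
          _ ≤ ‖x - x₀‖ + ‖x₀ - b‖ := norm_add_le _ _
          _ ≤ R + r := add_le_add hxR (hxa b hb)
        have h4 : ‖(x-a)+(x-b)‖ ≤ K := by
          calc ‖(x-a)+(x-b)‖ ≤ ‖x-a‖ + ‖x-b‖ := norm_add_le _ _
          _ ≤ (R + r) + (R + r) := add_le_add hxar hxbr
          _ = K := by rw [hKdef]; ring
        have h5 : ‖b - a‖ = ‖a - b‖ := norm_sub_rev _ _
        have h6 : rho l p X a ≤ Q l p (x - a) := csInf_le (hbddB a ha) ⟨x, hx, rfl⟩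
        have h7 : |pseudoInner l p ((x-a)+(x-b)) ((x-a)-(x-b))| ≤ K * ‖a - b‖ := by
          refine h2.trans ?_
          rw [h3, h5]
          exact mul_le_mul_of_nonneg_right h4 (norm_nonneg _)
        rw [abs_le] at h7
        have h8 : Q l p (x-a) - Q l p (x-b) ≤ K * ‖a - b‖ := by rw [h1]; exact h7.2
        linarith
      · push_neg at hxR
        have h1 := hlb b hb x hx
        have ht1 : 1 ≤ ‖x - x₀‖ := hR1.trans hxR.le
        have hcR : 2*r + 2*r^2 + 2 ≤ c*R := by
          calc 2*r + 2*r^2 + 2 = ((2*r + 2*r^2 + 2)/c)*c := (div_mul_cancel₀ _ hc.ne').symm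
          _ ≤ R*c := mul_le_mul_of_nonneg_right hRge hc.le
          _ = c*R := mul_comm _ _
        have h2 : r^2 + 2 ≤ Q l p (x - b) := by
          have hA : (2*r + 2*r^2 + 2) * ‖x-x₀‖ ≤ (c*R) * ‖x-x₀‖ :=
            mul_le_mul_of_nonneg_right hcR (norm_nonneg _)
          have hB : (c*R)*‖x-x₀‖ ≤ c*‖x-x₀‖*‖x-x₀‖ :=
            mul_le_mul_of_nonneg_right (mul_le_mul_of_nonneg_left hxR.le hc.le) (norm_nonneg _)
          have hC : (2*r^2+2)*1 ≤ (2*r^2+2)*‖x-x₀‖ :=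
            mul_le_mul_of_nonneg_left ht1 (by positivity)
          nlinarith [hA, hB, hC]
        have h3 := hrho_le a ha
        linarith
    have hlow : rho l p X a - K*‖a-b‖ ≤ rho l p X b := by
      apply le_csInf (hne' b)
      rintro z ⟨x, hx, rfl⟩
      simp only
      linarith [main x hx]
    linarith
  intro a ha b hb
  have h1 := key a ha b hb
  have h2 := key b hb a ha
  have hab : ‖b - a‖ = ‖a - b‖ := norm_sub_rev _ _
  rw [Real.dist_eq, Real.coe_toNNReal _ hK0, dist_eq_norm, abs_sub_le_iff]
  constructor <;> [linarith; (rw [← hab] at *; linarith)]
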